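/- Let f : ℝ → ℂ be a Schwartz function and let D(a,b) = ∂W₂/∂a (a,b) denote the partial derivative of W₂ with respect to the scale variable a. Then for every a > 0 and b ∈ ℝ, D is differentiable in b and satisfies the hyperbolic equation ∂D/∂b (a,b) + (πi/a)·D(a,b) = 0; i.e. W₂ satisfies ∂²W₂/(∂a ∂b) + (πi/a)·∂W₂/∂a = 0. -/

import Mathlib

open Real Complex MeasureTheory

/-- **Hyperbolic PDE for `W₂`.**
For a Schwartz function `f`, let `D(a,b) = ∂W₂/∂a (a,b) = −(1/(2π a²))·∫ f(t)·e^{πi(t−b)/a} dt`.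
Then for every `a > 0` and `b ∈ ℝ`, `D` is differentiable in `b` with
`∂D/∂b (a,b) = −(πi/a)·D(a,b)`, i.e. `∂²W₂/(∂a∂b) + (πi/a)·∂W₂/∂a = 0`. -/
theorem W2_hyperbolic_pde (f : SchwartzMap ℝ ℂ) (a b : ℝ) (ha : 0 < a) :
    HasDerivAt
      (fun b' : ℝ => -(1 / (2 * (Real.pi : ℂ) * a ^ 2)) *
        ∫ t : ℝ, f t * Complex.exp (Real.pi * Complex.I * (t - b') / a))
      (-(Real.pi * Complex.I / a) *
        (-(1 / (2 * (Real.pi : ℂ) * a ^ 2)) *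
          ∫ t : ℝ, f t * Complex.exp (Real.pi * Complex.I * (t - b) / a))) b := by
  have ha' : (a : ℂ) ≠ 0 := by exact_mod_cast ha.ne'
  set C : ℂ := -(1 / (2 * (Real.pi : ℂ) * a ^ 2))
  set K : ℂ := ∫ t : ℝ, f t * Complex.exp (Real.pi * Complex.I * t / a)
  have key : ∀ b' : ℝ,
      (∫ t : ℝ, f t * Complex.exp (Real.pi * Complex.I * (t - b') / a))
        = K * Complex.exp (-(Real.pi * Complex.I / a) * b') := by
    intro b'
    rw [show K * Complex.exp (-(Real.pi * Complex.I / a) * b')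
        = ∫ t : ℝ, (f t * Complex.exp (Real.pi * Complex.I * t / a)) *
            Complex.exp (-(Real.pi * Complex.I / a) * b') from
      (MeasureTheory.integral_mul_const _ _).symm]
    congr 1; funext t
    have he : Complex.exp (Real.pi * Complex.I * (t - b') / a)
        = Complex.exp (Real.pi * Complex.I * t / a) * Complex.exp (-(Real.pi * Complex.I / a) * b') := by
      rw [← Complex.exp_add]; congr 1; field_simp; ring
    rw [he]; ring
  have h1 : HasDerivAt (fun b' : ℝ => C * (K * Complex.exp (-(Real.pi * Complex.I / a) * b')))
      (C * (K * (Complex.exp (-(Real.pi * Complex.I / a) * b) * (-(Real.pi * Complex.I / a))))) b := by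
    have he : HasDerivAt (fun b' : ℝ => Complex.exp (-(Real.pi * Complex.I / a) * (b' : ℂ)))
        (Complex.exp (-(Real.pi * Complex.I / a) * b) * (-(Real.pi * Complex.I / a))) b := by
      have h0 : HasDerivAt (fun b' : ℝ => (-(Real.pi * Complex.I / a)) * (b' : ℂ))
          (-(Real.pi * Complex.I / a)) b := by
        simpa using (Complex.ofRealCLM.hasDerivAt (x := b)).const_mul (-(Real.pi * Complex.I / a))
      simpa [mul_comm, Function.comp_def] using (Complex.hasDerivAt_exp _).comp b h0
    exact (he.const_mul K).const_mul C
  have h2 : HasDerivAt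
      (fun b' : ℝ => C * ∫ t : ℝ, f t * Complex.exp (Real.pi * Complex.I * (t - b') / a))
      (C * (K * (Complex.exp (-(Real.pi * Complex.I / a) * b) * (-(Real.pi * Complex.I / a))))) b := by
    refine h1.congr_of_eventuallyEq ?_
    filter_upwards with b' using by rw [key b']
  rw [key b]
  convert h2 using 1
  ring
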